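/- Let (𝒪,𝒜,T,e,≼) be a Direct Preference Process such that the restriction of ≼ to Dist(Ω^e) is a total consistent preorder. Then there exists a deterministic ≼-optimal policy. -/
import Mathlib


open Finset

/-- A history: an initial observation together with a list of action-observation pairs. -/
abbrev Hist (O A : Type*) := O × List (A × O)

/-- The length (time index) of a history. -/
def hlen {O A : Type*} (h : Hist O A) : ℕ := h.2.length

/-- Append an action-observation pair to a history. -/
def hext {O A : Type*} (h : Hist O A) (a : A) (o : O) : Hist O A :=
  (h.1, h.2 ++ [(a, o)])

/-- The length-`t` prefix of a history/trajectory. -/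
def hpre {O A : Type*} (h : Hist O A) (t : ℕ) : Hist O A := (h.1, h.2.take t)

section DPP

variable {O A : Type*} [Fintype O] [Fintype A] [DecidableEq O] [DecidableEq A]

/-- The finite set of all length-`T` histories (trajectories). -/
def trajFinset (O A : Type*) [Fintype O] [Fintype A] [DecidableEq O] [DecidableEq A]
    (T : ℕ) : Finset (Hist O A) :=
  Finset.image (fun p : O × (Fin T → A × O) => ((p.1, List.ofFn p.2) : Hist O A))
    Finset.univ

/-- `π` is a policy: a distribution over actions for each history. -/
def IsPolicy (π : Hist O A → A → ℝ) : Prop :=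
  ∀ h, (∀ a, 0 ≤ π h a) ∧ ∑ a, π h a = 1

/-- `(ρ0, ρ)` is an environment: an initial observation distribution and
history-dependent transition probabilities. -/
def IsEnv (ρ0 : O → ℝ) (ρ : Hist O A → A → O → ℝ) : Prop :=
  ((∀ o, 0 ≤ ρ0 o) ∧ ∑ o, ρ0 o = 1) ∧
    ∀ h a, (∀ o, 0 ≤ ρ h a o) ∧ ∑ o, ρ h a o = 1

/-- `Dpi ρ π n h` : the distribution over trajectories induced by starting at `h`
(with `n` steps remaining) and following policy `π` in environment `ρ`. -/
noncomputable def Dpi (ρ : Hist O A → A → O → ℝ) (π : Hist O A → A → ℝ) :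
    ℕ → Hist O A → Hist O A → ℝ
  | 0, h, ω => if ω = h then 1 else 0
  | n + 1, h, ω => ∑ a, π h a * ∑ o, ρ h a o * Dpi ρ π n (hext h a o) ω

/-- `D^π(h)` with horizon `T`. -/
noncomputable def DpiH (T : ℕ) (ρ : Hist O A → A → O → ℝ) (π : Hist O A → A → ℝ)
    (h : Hist O A) : Hist O A → ℝ :=
  Dpi ρ π (T - hlen h) h

/-- `D^π(h · a)` : take action `a` at `h`, then follow `π`. -/
noncomputable def DpiA (T : ℕ) (ρ : Hist O A → A → O → ℝ) (π : Hist O A → A → ℝ)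
    (h : Hist O A) (a : A) : Hist O A → ℝ :=
  fun ω => ∑ o, ρ h a o * Dpi ρ π (T - hlen h - 1) (hext h a o) ω

/-- Attainable histories in environment `(ρ0, ρ)`. -/
inductive Attainable (ρ0 : O → ℝ) (ρ : Hist O A → A → O → ℝ) : Hist O A → Prop
  | base (o : O) : 0 < ρ0 o → Attainable ρ0 ρ (o, ([] : List (A × O)))
  | step (h : Hist O A) (a : A) (o : O) :
      Attainable ρ0 ρ h → 0 < ρ h a o → Attainable ρ0 ρ (hext h a o)

/-- A distribution over trajectories (length-`T` histories). -/
def IsTrajDist (T : ℕ) (D : Hist O A → ℝ) : Prop :=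
  (∀ ω, 0 ≤ D ω) ∧ (∀ ω, D ω ≠ 0 → hlen ω = T) ∧
    ∑ ω ∈ trajFinset O A T, D ω = 1

/-- A distribution over the attainable trajectories `Ω^e`. -/
def IsAttDist (T : ℕ) (ρ0 : O → ℝ) (ρ : Hist O A → A → O → ℝ)
    (D : Hist O A → ℝ) : Prop :=
  IsTrajDist T D ∧ ∀ ω, D ω ≠ 0 → Attainable ρ0 ρ ω

/-- Pointwise convex combination. -/
def mix {X : Type*} (α : ℝ) (A B : X → ℝ) : X → ℝ :=
  fun x => α * A x + (1 - α) * B x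

/-- The restriction of `R` to `Dist(Ω^e)` is a total consistent preorder. -/
def RestrTotalConsistentPreorder (T : ℕ) (ρ0 : O → ℝ)
    (ρ : Hist O A → A → O → ℝ) (R : (Hist O A → ℝ) → (Hist O A → ℝ) → Prop) : Prop :=
  (∀ D, IsAttDist T ρ0 ρ D → R D D) ∧
  (∀ D₁ D₂ D₃, IsAttDist T ρ0 ρ D₁ → IsAttDist T ρ0 ρ D₂ → IsAttDist T ρ0 ρ D₃ →
    R D₁ D₂ → R D₂ D₃ → R D₁ D₃) ∧
  (∀ D₁ D₂, IsAttDist T ρ0 ρ D₁ → IsAttDist T ρ0 ρ D₂ → (R D₁ D₂ ∨ R D₂ D₁)) ∧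
  (∀ α : ℝ, 0 < α → α < 1 → ∀ D₁ D₂ D₃, IsAttDist T ρ0 ρ D₁ →
    IsAttDist T ρ0 ρ D₂ → IsAttDist T ρ0 ρ D₃ →
    R D₁ D₂ → R (mix α D₁ D₃) (mix α D₂ D₃))

/-- `π` is a `≼`-optimal policy. -/
def OptimalPolicy (T : ℕ) (ρ0 : O → ℝ) (ρ : Hist O A → A → O → ℝ)
    (R : (Hist O A → ℝ) → (Hist O A → ℝ) → Prop) (π : Hist O A → A → ℝ) : Prop :=
  ∀ h, Attainable ρ0 ρ h → hlen h ≤ T →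
    ∀ π', IsPolicy π' → R (DpiH T ρ π' h) (DpiH T ρ π h)

/-- The optimal action set of policy `π` at history `h`. -/
def OptActions (T : ℕ) (ρ : Hist O A → A → O → ℝ)
    (R : (Hist O A → ℝ) → (Hist O A → ℝ) → Prop) (π : Hist O A → A → ℝ)
    (h : Hist O A) : Set A :=
  {a | ∀ a', R (DpiA T ρ π h a') (DpiA T ρ π h a)}

end DPP


section AuxProof

variable {O A : Type*} [Fintype O] [Fintype A] [DecidableEq O] [DecidableEq A]

lemma hlen_hext (h : Hist O A) (a : A) (o : O) : hlen (hext h a o) = hlen h + 1 := by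
  simp [hlen, hext]

lemma mem_trajFinset {T : ℕ} {ω : Hist O A} (hω : hlen ω = T) : ω ∈ trajFinset O A T := by
  rcases ω with ⟨o, l⟩
  have hl : l.length = T := hω
  subst hl
  exact Finset.mem_image.2 ⟨⟨o, fun i => l.get i⟩, Finset.mem_univ _, by simp⟩

variable {T : ℕ} {ρ0 : O → ℝ} {ρ : Hist O A → A → O → ℝ}
  {R : (Hist O A → ℝ) → (Hist O A → ℝ) → Prop}

lemma dirac_isAttDist (h : Hist O A) (hatt : Attainable ρ0 ρ h) (hT : hlen h = T) :
    IsAttDist T ρ0 ρ (fun ω => if ω = h then (1:ℝ) else 0) := by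
  refine ⟨⟨fun ω => by dsimp only; split <;> norm_num, fun ω hω => ?_, ?_⟩, fun ω hω => ?_⟩
  · by_cases hh : ω = h
    · subst hh; exact hT
    · simp [hh] at hω
  · rw [Finset.sum_ite_eq' (trajFinset O A T) h fun _ => (1:ℝ)]
    exact if_pos (mem_trajFinset hT)
  · by_cases hh : ω = h
    · subst hh; exact hatt
    · simp [hh] at hω

lemma Dpi_nonneg (π₀ : Hist O A → A → ℝ) (hπ : IsPolicy π₀)
    (hρ : ∀ h a o, 0 ≤ ρ h a o) :
    ∀ (n : ℕ) (h ω : Hist O A), 0 ≤ Dpi ρ π₀ n h ω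
  | 0, h, ω => by simp only [Dpi]; split <;> norm_num
  | n+1, h, ω => by
      simp only [Dpi]
      exact Finset.sum_nonneg fun a _ => mul_nonneg ((hπ h).1 a)
        (Finset.sum_nonneg fun o _ => mul_nonneg (hρ h a o) (Dpi_nonneg π₀ hπ hρ n _ ω))

lemma Dpi_len (π₀ : Hist O A → A → ℝ) :
    ∀ (n : ℕ) (h ω : Hist O A), Dpi ρ π₀ n h ω ≠ 0 → hlen ω = hlen h + n
  | 0, h, ω, hne => by
      simp only [Dpi] at hne
      by_cases hh : ω = h
      · subst hh; simp
      · simp [hh] at hne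
  | n+1, h, ω, hne => by
      simp only [Dpi] at hne
      obtain ⟨a, -, ha⟩ := Finset.exists_ne_zero_of_sum_ne_zero hne
      have h2 : (∑ o, ρ h a o * Dpi ρ π₀ n (hext h a o) ω) ≠ 0 :=
        fun h0 => ha (by rw [h0, mul_zero])
      obtain ⟨o, -, ho⟩ := Finset.exists_ne_zero_of_sum_ne_zero h2
      have := Dpi_len π₀ n (hext h a o) ω (fun h0 => ho (by rw [h0, mul_zero]))
      rw [hlen_hext] at this; omega

lemma Dpi_att (π₀ : Hist O A → A → ℝ) (hρ : ∀ h a o, 0 ≤ ρ h a o) :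
    ∀ (n : ℕ) (h ω : Hist O A), Attainable ρ0 ρ h → Dpi ρ π₀ n h ω ≠ 0 → Attainable ρ0 ρ ω
  | 0, h, ω, hatt, hne => by
      simp only [Dpi] at hne
      by_cases hh : ω = h
      · subst hh; exact hatt
      · simp [hh] at hne
  | n+1, h, ω, hatt, hne => by
      simp only [Dpi] at hne
      obtain ⟨a, -, ha⟩ := Finset.exists_ne_zero_of_sum_ne_zero hne
      have h2 : (∑ o, ρ h a o * Dpi ρ π₀ n (hext h a o) ω) ≠ 0 :=
        fun h0 => ha (by rw [h0, mul_zero])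
      obtain ⟨o, -, ho⟩ := Finset.exists_ne_zero_of_sum_ne_zero h2
      have hρne : ρ h a o ≠ 0 := fun h0 => ho (by rw [h0, zero_mul])
      have hDne : Dpi ρ π₀ n (hext h a o) ω ≠ 0 := fun h0 => ho (by rw [h0, mul_zero])
      exact Dpi_att π₀ hρ n (hext h a o) ω
        (Attainable.step h a o hatt (lt_of_le_of_ne (hρ h a o) (Ne.symm hρne))) hDne

lemma Dpi_sum (π₀ : Hist O A → A → ℝ) (hπ : IsPolicy π₀)
    (hρsum : ∀ h a, ∑ o, ρ h a o = 1) :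
    ∀ (n : ℕ) (h : Hist O A), hlen h + n = T → ∑ ω ∈ trajFinset O A T, Dpi ρ π₀ n h ω = 1
  | 0, h, hT => by
      simp only [Dpi]
      rw [Finset.sum_ite_eq' (trajFinset O A T) h fun _ => (1:ℝ)]
      exact if_pos (mem_trajFinset (by omega))
  | n+1, h, hT => by
      simp only [Dpi]
      rw [Finset.sum_comm]
      have hstep : ∀ a ∈ (Finset.univ : Finset A),
          (∑ ω ∈ trajFinset O A T, π₀ h a * ∑ o, ρ h a o * Dpi ρ π₀ n (hext h a o) ω)
            = π₀ h a := by
        intro a _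
        rw [← Finset.mul_sum, Finset.sum_comm]
        have h2 : ∀ o ∈ (Finset.univ : Finset O),
            (∑ ω ∈ trajFinset O A T, ρ h a o * Dpi ρ π₀ n (hext h a o) ω) = ρ h a o := by
          intro o _
          rw [← Finset.mul_sum,
            Dpi_sum π₀ hπ hρsum n (hext h a o) (by rw [hlen_hext]; omega), mul_one]
        rw [Finset.sum_congr rfl h2, hρsum h a, mul_one]
      rw [Finset.sum_congr rfl hstep, (hπ h).2]

lemma Dpi_isAttDist (henv : IsEnv ρ0 ρ) {π₀ : Hist O A → A → ℝ} (hπ : IsPolicy π₀)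
    (n : ℕ) (h : Hist O A) (hatt : Attainable ρ0 ρ h) (hT : hlen h + n = T) :
    IsAttDist T ρ0 ρ (Dpi ρ π₀ n h) :=
  ⟨⟨Dpi_nonneg π₀ hπ (fun h a => (henv.2 h a).1) n h,
    fun ω hω => by rw [Dpi_len π₀ n h ω hω]; omega,
    Dpi_sum π₀ hπ (fun h a => (henv.2 h a).2) n h hT⟩,
   fun ω hω => Dpi_att π₀ (fun h a => (henv.2 h a).1) n h ω hatt hω⟩

lemma mix_isAttDist {α : ℝ} (h0 : 0 ≤ α) (h1 : α ≤ 1) {D₁ D₂ : Hist O A → ℝ}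
    (hD₁ : IsAttDist T ρ0 ρ D₁) (hD₂ : IsAttDist T ρ0 ρ D₂) :
    IsAttDist T ρ0 ρ (mix α D₁ D₂) := by
  obtain ⟨⟨n1, l1, s1⟩, a1⟩ := hD₁
  obtain ⟨⟨n2, l2, s2⟩, a2⟩ := hD₂
  have key : ∀ ω, mix α D₁ D₂ ω ≠ 0 → D₁ ω ≠ 0 ∨ D₂ ω ≠ 0 := by
    intro ω hω
    by_contra hc
    push_neg at hc
    exact hω (by simp [mix, hc.1, hc.2])
  refine ⟨⟨fun ω => add_nonneg (mul_nonneg h0 (n1 ω)) (mul_nonneg (by linarith) (n2 ω)),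
    fun ω hω => ?_, ?_⟩, fun ω hω => ?_⟩
  · rcases key ω hω with h | h
    exacts [l1 ω h, l2 ω h]
  · show (∑ ω ∈ trajFinset O A T, (α * D₁ ω + (1 - α) * D₂ ω)) = 1
    rw [Finset.sum_add_distrib, ← Finset.mul_sum, ← Finset.mul_sum, s1, s2]; ring
  · rcases key ω hω with h | h
    exacts [a1 ω h, a2 ω h]

lemma pair_mix (hR : RestrTotalConsistentPreorder T ρ0 ρ R) {α : ℝ} (h0 : 0 < α) (h1 : α < 1)
    {D₁ D₂ D₃ D₄ : Hist O A → ℝ}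
    (S1 : IsAttDist T ρ0 ρ D₁) (S2 : IsAttDist T ρ0 ρ D₂)
    (S3 : IsAttDist T ρ0 ρ D₃) (S4 : IsAttDist T ρ0 ρ D₄)
    (h12 : R D₁ D₂) (h34 : R D₃ D₄) : R (mix α D₁ D₃) (mix α D₂ D₄) := by
  have e1 : mix α D₂ D₃ = mix (1-α) D₃ D₂ := by funext ω; simp only [mix]; ring
  have e2 : mix α D₂ D₄ = mix (1-α) D₄ D₂ := by funext ω; simp only [mix]; ring
  have c1 := hR.2.2.2 α h0 h1 D₁ D₂ D₃ S1 S2 S3 h12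
  have c2 := hR.2.2.2 (1-α) (by linarith) (by linarith) D₃ D₄ D₂ S3 S4 S2 h34
  rw [← e1, ← e2] at c2
  exact hR.2.1 _ _ _ (mix_isAttDist h0.le h1.le S1 S3) (mix_isAttDist h0.le h1.le S2 S3)
    (mix_isAttDist h0.le h1.le S2 S4) c1 c2

lemma comb2 (hR : RestrTotalConsistentPreorder T ρ0 ρ R) {ι : Type*} [DecidableEq ι]
    (s : Finset ι) (p : ι → ℝ) (D' D : ι → Hist O A → ℝ)
    (hp : ∀ i ∈ s, 0 ≤ p i) (hsum : ∑ i ∈ s, p i = 1)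
    (hD : ∀ i ∈ s, 0 < p i →
      IsAttDist T ρ0 ρ (D' i) ∧ IsAttDist T ρ0 ρ (D i) ∧ R (D' i) (D i)) :
    IsAttDist T ρ0 ρ (fun ω => ∑ i ∈ s, p i * D' i ω) ∧
      IsAttDist T ρ0 ρ (fun ω => ∑ i ∈ s, p i * D i ω) ∧
      R (fun ω => ∑ i ∈ s, p i * D' i ω) (fun ω => ∑ i ∈ s, p i * D i ω) := by
  induction s using Finset.induction generalizing p with
  | empty => simp at hsum
  | @insert i s hi ih =>
    have hpi : 0 ≤ p i := hp i (Finset.mem_insert_self i s)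
    have hsum' : p i + ∑ b ∈ s, p b = 1 := by rw [← Finset.sum_insert hi]; exact hsum
    have hrest : 0 ≤ ∑ b ∈ s, p b :=
      Finset.sum_nonneg fun b hb => hp b (Finset.mem_insert_of_mem hb)
    rcases eq_or_lt_of_le hpi with hz | hpos
    · have e : ∀ (E : ι → Hist O A → ℝ),
          (fun ω => ∑ b ∈ insert i s, p b * E b ω) = (fun ω => ∑ b ∈ s, p b * E b ω) := by
        intro E; funext ω; rw [Finset.sum_insert hi, ← hz, zero_mul, zero_add]
      rw [e D', e D]
      exact ih p (fun b hb => hp b (Finset.mem_insert_of_mem hb)) (by linarith)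
        (fun b hb hb0 => hD b (Finset.mem_insert_of_mem hb) hb0)
    have hle1 : p i ≤ 1 := by linarith
    rcases eq_or_lt_of_le hle1 with h1 | hlt
    · have hall : ∀ b ∈ s, p b = 0 := by
        intro b hb
        have hz : ∑ b ∈ s, p b = 0 := by linarith
        exact (Finset.sum_eq_zero_iff_of_nonneg
          (fun b hb => hp b (Finset.mem_insert_of_mem hb))).1 hz b hb
      have e : ∀ (E : ι → Hist O A → ℝ),
          (fun ω => ∑ b ∈ insert i s, p b * E b ω) = E i := by
        intro E; funext ω
        rw [Finset.sum_insert hi, h1, one_mul,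
          Finset.sum_eq_zero (fun b hb => by rw [hall b hb, zero_mul]), add_zero]
      rw [e D', e D]
      exact hD i (Finset.mem_insert_self i s) hpos
    · have hc1 : (1:ℝ) - p i ≠ 0 := by linarith
      have hcpos : (0:ℝ) < 1 - p i := by linarith
      set q : ι → ℝ := fun b => p b / (1 - p i) with hq
      have hqsum : ∑ b ∈ s, q b = 1 := by
        rw [hq]
        simp only
        rw [← Finset.sum_div]
        have : ∑ b ∈ s, p b = 1 - p i := by linarith
        rw [this, div_self hc1]
      obtain ⟨S1, S2, hr⟩ := ih q
        (fun b hb => div_nonneg (hp b (Finset.mem_insert_of_mem hb)) hcpos.le) hqsum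
        (fun b hb hb0 => by
          refine hD b (Finset.mem_insert_of_mem hb) ?_
          have := mul_pos hb0 hcpos
          rwa [hq, div_mul_cancel₀ _ hc1] at this)
      have e : ∀ (E : ι → Hist O A → ℝ),
          (fun ω => ∑ b ∈ insert i s, p b * E b ω)
            = mix (p i) (E i) (fun ω => ∑ b ∈ s, q b * E b ω) := by
        intro E; funext ω
        simp only [mix]
        rw [Finset.sum_insert hi]
        congr 1
        rw [Finset.mul_sum]
        refine Finset.sum_congr rfl fun b hb => ?_
        rw [← mul_assoc, mul_comm ((1:ℝ) - p i) (q b), hq]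
        simp only
        rw [div_mul_cancel₀ _ hc1]
      rw [e D', e D]
      obtain ⟨Si', Si, hri⟩ := hD i (Finset.mem_insert_self i s) hpos
      exact ⟨mix_isAttDist hpos.le hlt.le Si' S1, mix_isAttDist hpos.le hlt.le Si S2,
        pair_mix hR hpos hlt Si' Si S1 S2 hri hr⟩

lemma finset_max (hR : RestrTotalConsistentPreorder T ρ0 ρ R) {ι : Type*} [DecidableEq ι]
    (s : Finset ι) (D : ι → Hist O A → ℝ) :
    s.Nonempty → (∀ i ∈ s, IsAttDist T ρ0 ρ (D i)) → ∃ i ∈ s, ∀ j ∈ s, R (D j) (D i) := by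
  induction s using Finset.induction with
  | empty => intro hs _; simp at hs
  | @insert i s hi ih =>
    intro _ hD
    rcases s.eq_empty_or_nonempty with rfl | hsne
    · refine ⟨i, Finset.mem_insert_self i _, fun j hj => ?_⟩
      rw [Finset.mem_insert] at hj
      rcases hj with rfl | hj
      · exact hR.1 _ (hD j (Finset.mem_insert_self j _))
      · simp at hj
    · obtain ⟨k, hk, hkmax⟩ := ih hsne (fun j hj => hD j (Finset.mem_insert_of_mem hj))
      have hSi := hD i (Finset.mem_insert_self i s)
      have hSk := hD k (Finset.mem_insert_of_mem hk)
      rcases hR.2.2.1 (D i) (D k) hSi hSk with hik | hki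
      · refine ⟨k, Finset.mem_insert_of_mem hk, fun j hj => ?_⟩
        rcases Finset.mem_insert.1 hj with rfl | hj
        · exact hik
        · exact hkmax j hj
      · refine ⟨i, Finset.mem_insert_self i s, fun j hj => ?_⟩
        rcases Finset.mem_insert.1 hj with rfl | hj
        · exact hR.1 _ hSi
        · exact hR.2.1 _ _ _ (hD j (Finset.mem_insert_of_mem hj)) hSk hSi (hkmax j hj) hki

lemma Dpi_congr (π₁ π₂ : Hist O A → A → ℝ) :
    ∀ (n : ℕ) (h : Hist O A), (∀ g : Hist O A, hlen h ≤ hlen g → π₁ g = π₂ g) →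
      Dpi ρ π₁ n h = Dpi ρ π₂ n h
  | 0, h, _ => by funext ω; simp only [Dpi]
  | n+1, h, hag => by
      funext ω
      simp only [Dpi]
      refine Finset.sum_congr rfl fun a _ => ?_
      rw [hag h le_rfl]
      congr 1
      refine Finset.sum_congr rfl fun o _ => ?_
      rw [Dpi_congr π₁ π₂ n (hext h a o) fun g hg => hag g (by rw [hlen_hext] at hg; omega)]

/-- The distribution after taking action `a` at `h` and then following `π₀` for `n` steps. -/
noncomputable def DA' (ρ : Hist O A → A → O → ℝ) (π₀ : Hist O A → A → ℝ) (n : ℕ)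
    (h : Hist O A) (a : A) : Hist O A → ℝ :=
  fun ω => ∑ o, ρ h a o * Dpi ρ π₀ n (hext h a o) ω

open Classical in
noncomputable def chooseAct [Nonempty A] (ρ : Hist O A → A → O → ℝ)
    (R : (Hist O A → ℝ) → (Hist O A → ℝ) → Prop) (π₀ : Hist O A → A → ℝ) (n : ℕ)
    (h : Hist O A) : A :=
  if hx : ∃ a0 : A, ∀ a : A, R (DA' ρ π₀ n h a) (DA' ρ π₀ n h a0) then hx.choose
  else Classical.arbitrary A

open Classical in
lemma chooseAct_spec [Nonempty A] {π₀ : Hist O A → A → ℝ} {n : ℕ} {h : Hist O A}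
    (hx : ∃ a0 : A, ∀ a : A, R (DA' ρ π₀ n h a) (DA' ρ π₀ n h a0)) :
    ∀ a : A, R (DA' ρ π₀ n h a) (DA' ρ π₀ n h (chooseAct ρ R π₀ n h)) := by
  unfold chooseAct
  rw [dif_pos hx]
  exact hx.choose_spec

noncomputable def pol [Nonempty A] (T : ℕ) (ρ : Hist O A → A → O → ℝ)
    (R : (Hist O A → ℝ) → (Hist O A → ℝ) → Prop) : ℕ → Hist O A → A → ℝ
  | 0 => fun _ a => if a = Classical.arbitrary A then 1 else 0
  | n+1 => fun h a => if T - hlen h ≤ n then pol T ρ R n h a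
      else if a = chooseAct ρ R (pol T ρ R n) n h then 1 else 0

lemma pol_dirac [Nonempty A] :
    ∀ (n : ℕ) (h : Hist O A), ∃ a : A, ∀ a' : A,
      pol T ρ R n h a' = if a' = a then 1 else 0
  | 0, h => ⟨Classical.arbitrary A, fun a' => by simp only [pol]⟩
  | n+1, h => by
      by_cases hc : T - hlen h ≤ n
      · obtain ⟨a, ha⟩ := pol_dirac n h
        exact ⟨a, fun a' => by simp only [pol, if_pos hc]; exact ha a'⟩
      · exact ⟨chooseAct ρ R (pol T ρ R n) n h, fun a' => by simp only [pol, if_neg hc]⟩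

lemma pol_stab [Nonempty A] :
    ∀ (m : ℕ) (h : Hist O A), T - hlen h ≤ m →
      pol T ρ R m h = pol T ρ R (T - hlen h) h
  | 0, h, hle => by rw [Nat.le_zero.mp hle]
  | m+1, h, hle => by
      by_cases hc : T - hlen h ≤ m
      · have e : pol T ρ R (m+1) h = pol T ρ R m h := by
          funext a; simp only [pol, if_pos hc]
        rw [e, pol_stab m h hc]
      · have e : T - hlen h = m+1 := by omega
        rw [e]

lemma pol_isPolicy [Nonempty A] :
    IsPolicy (fun g : Hist O A => pol T ρ R (T - hlen g) g) := by
  intro g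
  obtain ⟨a, ha⟩ := pol_dirac (T := T) (ρ := ρ) (R := R) (T - hlen g) g
  constructor
  · intro a'
    show 0 ≤ pol T ρ R (T - hlen g) g a'
    rw [ha a']
    split <;> norm_num
  · show ∑ a' : A, pol T ρ R (T - hlen g) g a' = 1
    rw [Finset.sum_congr rfl fun a' _ => ha a']
    simp

lemma main_opt [Nonempty A] (henv : IsEnv ρ0 ρ) (hR : RestrTotalConsistentPreorder T ρ0 ρ R) :
    ∀ (n : ℕ) (h : Hist O A), Attainable ρ0 ρ h → hlen h + n = T →
      ∀ π' : Hist O A → A → ℝ, IsPolicy π' →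
        R (Dpi ρ π' n h) (Dpi ρ (fun g => pol T ρ R (T - hlen g) g) n h)
  | 0, h, hatt, hT, π', hπ' => by
      have hd := dirac_isAttDist (T := T) h hatt (by omega)
      have e1 : Dpi ρ π' 0 h = fun ω => if ω = h then (1:ℝ) else 0 := by
        funext ω; simp only [Dpi]
      have e2 : Dpi ρ (fun g => pol T ρ R (T - hlen g) g) 0 h
          = fun ω => if ω = h then (1:ℝ) else 0 := by
        funext ω; simp only [Dpi]
      rw [e1, e2]
      exact hR.1 _ hd
  | n+1, h, hatt, hT, π', hπ' => by
      have hPolPi : IsPolicy (fun g : Hist O A => pol T ρ R (T - hlen g) g) :=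
        pol_isPolicy (T := T) (ρ := ρ) (R := R)
      have hagree : ∀ a o, Dpi ρ (pol T ρ R n) n (hext h a o)
          = Dpi ρ (fun g => pol T ρ R (T - hlen g) g) n (hext h a o) := by
        intro a o
        refine Dpi_congr _ _ n (hext h a o) fun g hg => ?_
        rw [hlen_hext] at hg
        exact pol_stab n g (by omega)
      have hDAeq : ∀ a, DA' ρ (pol T ρ R n) n h a
          = DA' ρ (fun g => pol T ρ R (T - hlen g) g) n h a := by
        intro a
        unfold DA'
        funext ω
        exact Finset.sum_congr rfl fun o _ => by rw [hagree a o]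
      have hsub : ∀ (πx : Hist O A → A → ℝ), IsPolicy πx → ∀ a o, 0 < ρ h a o →
          IsAttDist T ρ0 ρ (Dpi ρ πx n (hext h a o)) := by
        intro πx hπx a o hpos
        exact Dpi_isAttDist henv hπx n (hext h a o) (Attainable.step h a o hatt hpos)
          (by rw [hlen_hext]; omega)
      have hcomb : ∀ a, IsAttDist T ρ0 ρ (DA' ρ π' n h a) ∧
          IsAttDist T ρ0 ρ (DA' ρ (fun g => pol T ρ R (T - hlen g) g) n h a) ∧
          R (DA' ρ π' n h a) (DA' ρ (fun g => pol T ρ R (T - hlen g) g) n h a) := by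
        intro a
        have hco := comb2 hR Finset.univ (ρ h a)
          (fun o => Dpi ρ π' n (hext h a o))
          (fun o => Dpi ρ (fun g => pol T ρ R (T - hlen g) g) n (hext h a o))
          (fun o _ => (henv.2 h a).1 o) (henv.2 h a).2
          (fun o _ hpos => ⟨hsub π' hπ' a o hpos, hsub _ hPolPi a o hpos,
            main_opt henv hR n (hext h a o) (Attainable.step h a o hatt hpos)
              (by rw [hlen_hext]; omega) π' hπ'⟩)
        exact hco
      have hex : ∃ a0 : A, ∀ a : A,
          R (DA' ρ (pol T ρ R n) n h a) (DA' ρ (pol T ρ R n) n h a0) := by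
        obtain ⟨a0, -, hmax⟩ := finset_max hR Finset.univ
          (fun a => DA' ρ (pol T ρ R n) n h a) Finset.univ_nonempty
          (fun a _ => by show IsAttDist T ρ0 ρ (DA' ρ (pol T ρ R n) n h a); rw [hDAeq a]; exact (hcomb a).2.1)
        exact ⟨a0, fun a => hmax a (Finset.mem_univ a)⟩
      have hspec := chooseAct_spec (R := R) hex
      have hmax : ∀ a : A, R (DA' ρ (fun g => pol T ρ R (T - hlen g) g) n h a)
          (DA' ρ (fun g => pol T ρ R (T - hlen g) g) n h
            (chooseAct ρ R (pol T ρ R n) n h)) := by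
        intro a
        rw [← hDAeq a, ← hDAeq (chooseAct ρ R (pol T ρ R n) n h)]
        exact hspec a
      have hTh : T - hlen h = n + 1 := by omega
      have hpolh : ∀ a : A, pol T ρ R (T - hlen h) h a
          = if a = chooseAct ρ R (pol T ρ R n) n h then 1 else 0 := by
        intro a
        rw [hTh]
        simp only [pol]
        rw [if_neg (by omega : ¬ T - hlen h ≤ n)]
      have ePi : Dpi ρ (fun g => pol T ρ R (T - hlen g) g) (n+1) h
          = DA' ρ (fun g => pol T ρ R (T - hlen g) g) n h
            (chooseAct ρ R (pol T ρ R n) n h) := by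
        funext ω
        simp only [Dpi, DA']
        have hc : ∀ a ∈ (Finset.univ : Finset A),
            (fun g => pol T ρ R (T - hlen g) g) h a
              * (∑ o, ρ h a o * Dpi ρ (fun g => pol T ρ R (T - hlen g) g) n (hext h a o) ω)
            = (if a = chooseAct ρ R (pol T ρ R n) n h then 1 else 0)
              * (∑ o, ρ h a o * Dpi ρ (fun g => pol T ρ R (T - hlen g) g) n (hext h a o) ω) := by
          intro a _
          rw [show (fun g => pol T ρ R (T - hlen g) g) h a = pol T ρ R (T - hlen h) h a
            from rfl, hpolh a]
        rw [Finset.sum_congr rfl hc]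
        simp only [ite_mul, one_mul, zero_mul, Finset.sum_ite_eq', Finset.mem_univ, if_true]
      have hfin := comb2 hR Finset.univ (π' h)
        (fun a => DA' ρ π' n h a)
        (fun _ => DA' ρ (fun g => pol T ρ R (T - hlen g) g) n h
          (chooseAct ρ R (pol T ρ R n) n h))
        (fun a _ => (hπ' h).1 a) (hπ' h).2
        (fun a _ _ => ⟨(hcomb a).1, (hcomb (chooseAct ρ R (pol T ρ R n) n h)).2.1,
          hR.2.1 _ _ _ (hcomb a).1 (hcomb a).2.1
            (hcomb (chooseAct ρ R (pol T ρ R n) n h)).2.1 (hcomb a).2.2 (hmax a)⟩)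
      have e1 : Dpi ρ π' (n+1) h = (fun ω => ∑ a, π' h a * DA' ρ π' n h a ω) := by
        funext ω; simp only [Dpi, DA']
      have e2 : (fun ω => ∑ a : A, π' h a
            * DA' ρ (fun g => pol T ρ R (T - hlen g) g) n h
              (chooseAct ρ R (pol T ρ R n) n h) ω)
          = DA' ρ (fun g => pol T ρ R (T - hlen g) g) n h
              (chooseAct ρ R (pol T ρ R n) n h) := by
        funext ω; rw [← Finset.sum_mul, (hπ' h).2, one_mul]
      rw [e1, ePi, ← e2]
      exact hfin.2.2

end AuxProof

/-- existence of a deterministic optimal policy. -/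
theorem exists_deterministic_optimal {O A : Type*} [Fintype O] [Fintype A]
    [DecidableEq O] [DecidableEq A] [Nonempty O] [Nonempty A]
    (T : ℕ) (ρ0 : O → ℝ) (ρ : Hist O A → A → O → ℝ) (henv : IsEnv ρ0 ρ)
    (R : (Hist O A → ℝ) → (Hist O A → ℝ) → Prop)
    (hR : RestrTotalConsistentPreorder T ρ0 ρ R) :
    ∃ π : Hist O A → A → ℝ, IsPolicy π ∧
      (∀ h, ∃ a : A, ∀ a', π h a' = if a' = a then 1 else 0) ∧
      OptimalPolicy T ρ0 ρ R π := by
  refine ⟨fun g => pol T ρ R (T - hlen g) g, pol_isPolicy, fun h => pol_dirac (T - hlen h) h, ?_⟩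
  intro h hatt hle π' hπ'
  exact main_opt henv hR (T - hlen h) h hatt (by omega) π' hπ'
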